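/- (Proposition 2.2) Let (X, P(X), ∼) and (Y, P(Y), ≡) be smooth diffeological spaces and f : X → Y a smooth map. Then for each m ≥ 1 the map D^m f : T^m X → T^m Y defined by D^m f([α]_F) := [f ∘ α]_{f(F)} is a smooth map between the tangent smooth diffeological spaces (T^m X, P(T^m X), ≈) and (T^m Y, P(T^m Y), ≈). -/
import Mathlib


/-- An `n`-plaque of a set `X`: a function defined on an open subset of `ℝⁿ`
containing the origin (modelled as a total function together with its domain). -/
structure Plaque (X : Type*) (n : ℕ) where
  dom : Set (Fin n → ℝ)
  isOpen : IsOpen dom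
  zero_mem : (0 : Fin n → ℝ) ∈ dom
  toFun : (Fin n → ℝ) → X

namespace Plaque

variable {X Y : Type*} {n m : ℕ}

/-- Composition of a plaque with a map `ψ` defined on an open set `U'` containing `0`. -/
def comp (p : Plaque X n) (ψ : (Fin m → ℝ) → (Fin n → ℝ)) (U' : Set (Fin m → ℝ))
    (hU' : IsOpen U') (h0 : (0 : Fin m → ℝ) ∈ U') : Plaque X m :=
  ⟨U', hU', h0, fun r => p.toFun (ψ r)⟩

/-- Restriction of a plaque to an open subset of its domain containing `0`. -/
def restrict (p : Plaque X n) (V : Set (Fin n → ℝ)) (hV : IsOpen V)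
    (h0 : (0 : Fin n → ℝ) ∈ V) : Plaque X n :=
  ⟨V, hV, h0, p.toFun⟩

/-- Pushforward of a plaque along a map `f : X → Y`. -/
def map (f : X → Y) (p : Plaque X n) : Plaque Y n :=
  ⟨p.dom, p.isOpen, p.zero_mem, fun r => f (p.toFun r)⟩

end Plaque

/-- A diffeology on a set `X`: a set of `n`-plaques for every `n` such that
(i) the images of the plaques cover `X`; (ii) the smallest common extension of a
family of plaques in `P(X)` is again in `P(X)`; (iii) `P(X)` is stable under
precomposition with smooth maps between open sets. -/
structure Diffeology (X : Type*) where
  plaques : ∀ n : ℕ, Set (Plaque X n)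
  covers : ∀ x : X, ∃ (n : ℕ) (p : Plaque X n), p ∈ plaques n ∧ ∃ r ∈ p.dom, p.toFun r = x
  locality : ∀ {n : ℕ} (s : Set (Plaque X n)) (q : Plaque X n),
    (∀ p ∈ s, p ∈ plaques n) → q.dom = ⋃ p ∈ s, Plaque.dom p →
    (∀ p ∈ s, ∀ r ∈ Plaque.dom p, q.toFun r = p.toFun r) → q ∈ plaques n
  comp_mem : ∀ {n m : ℕ} (p : Plaque X n), p ∈ plaques n →
    ∀ (ψ : (Fin m → ℝ) → (Fin n → ℝ)) (U' : Set (Fin m → ℝ)) (hU' : IsOpen U')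
      (h0 : (0 : Fin m → ℝ) ∈ U'), ContDiffOn ℝ (⊤ : ℕ∞) ψ U' →
      (∀ r ∈ U', ψ r ∈ p.dom) → p.comp ψ U' hU' h0 ∈ plaques m

/-- A smooth diffeological space (SDS): a diffeology together with a family of
equivalence relations `∼ⁿ_F` on the plaques through `F` (for `n ≥ 1`), compatible
with smooth precomposition (fixing `0`) and with restriction. -/
structure SDS (X : Type*) extends Diffeology X where
  rel : ∀ (n : ℕ), X → Plaque X n → Plaque X n → Prop
  mem_of_rel : ∀ {n : ℕ} {F : X} {p₁ p₂ : Plaque X n}, 1 ≤ n → rel n F p₁ p₂ →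
    (p₁ ∈ plaques n ∧ p₁.toFun 0 = F) ∧ (p₂ ∈ plaques n ∧ p₂.toFun 0 = F)
  rel_refl : ∀ {n : ℕ} {F : X} (p : Plaque X n), 1 ≤ n → p ∈ plaques n → p.toFun 0 = F →
    rel n F p p
  rel_symm : ∀ {n : ℕ} {F : X} {p₁ p₂ : Plaque X n}, 1 ≤ n → rel n F p₁ p₂ → rel n F p₂ p₁
  rel_trans : ∀ {n : ℕ} {F : X} {p₁ p₂ p₃ : Plaque X n}, 1 ≤ n →
    rel n F p₁ p₂ → rel n F p₂ p₃ → rel n F p₁ p₃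
  rel_comp : ∀ {n m : ℕ} {F : X} {p₁ p₂ : Plaque X n}, 1 ≤ n → 1 ≤ m → rel n F p₁ p₂ →
    ∀ (ψ : (Fin m → ℝ) → (Fin n → ℝ)) (U' : Set (Fin m → ℝ)) (hU' : IsOpen U')
      (h0 : (0 : Fin m → ℝ) ∈ U'), ContDiffOn ℝ (⊤ : ℕ∞) ψ U' → ψ 0 = 0 →
      (∀ r ∈ U', ψ r ∈ p₁.dom) → (∀ r ∈ U', ψ r ∈ p₂.dom) →
      rel m F (p₁.comp ψ U' hU' h0) (p₂.comp ψ U' hU' h0)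
  rel_restrict : ∀ {n : ℕ} {F : X} (p : Plaque X n), 1 ≤ n → p ∈ plaques n → p.toFun 0 = F →
    ∀ (V : Set (Fin n → ℝ)) (hV : IsOpen V) (h0 : (0 : Fin n → ℝ) ∈ V), V ⊆ p.dom →
    rel n F p (p.restrict V hV h0)

namespace SDS

variable {X : Type*}

/-- The plaques through a point `F`. -/
def PlaqueAt (D : SDS X) (n : ℕ) (F : X) : Type _ :=
  {p : Plaque X n // p ∈ D.plaques n ∧ p.toFun 0 = F}

/-- The `n`-th tangent space at `F`: plaques through `F` modulo `∼ⁿ_F`. -/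
def Tangent (D : SDS X) (n : ℕ) (F : X) : Type _ :=
  Quot (fun p q : D.PlaqueAt n F => D.rel n F p.1 q.1)

/-- The `n`-th tangent bundle: the disjoint union of the tangent spaces. -/
def TangentBundle (D : SDS X) (n : ℕ) : Type _ := Σ F : X, D.Tangent n F

/-- Class of a plaque through `F` as a point of the tangent bundle. -/
def mkTangent (D : SDS X) {n : ℕ} {F : X} (p : Plaque X n) (hp : p ∈ D.plaques n)
    (h0 : p.toFun 0 = F) : D.TangentBundle n :=
  ⟨F, Quot.mk _ (⟨p, hp, h0⟩ : D.PlaqueAt n F)⟩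

end SDS

/-- A map between smooth diffeological spaces is smooth if it is differentiable
(maps plaques to plaques) and preserves the equivalence relations. -/
def IsSmooth {X Y : Type*} (DX : SDS X) (DY : SDS Y) (f : X → Y) : Prop :=
  (∀ (n : ℕ) (p : Plaque X n), p ∈ DX.plaques n → p.map f ∈ DY.plaques n) ∧
  (∀ (n : ℕ), 1 ≤ n → ∀ (F : X) (p₁ p₂ : Plaque X n), DX.rel n F p₁ p₂ →
    DY.rel n (f F) (p₁.map f) (p₂.map f))

/-- The set of plaques generated by a set `S` of plaques: those `p` that locally
factor as `f ∘ φ` with `f ∈ S` and `φ` smooth. -/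
def generatedPlaques {X : Type*} (S : ∀ n : ℕ, Set (Plaque X n)) : ∀ n : ℕ, Set (Plaque X n) :=
  fun n => {p | ∀ r ∈ p.dom, ∃ Ur : Set (Fin n → ℝ), IsOpen Ur ∧ r ∈ Ur ∧ Ur ⊆ p.dom ∧
    ∃ (k : ℕ) (f : Plaque X k), f ∈ S k ∧ ∃ φ : (Fin n → ℝ) → (Fin k → ℝ),
      ContDiffOn ℝ (⊤ : ℕ∞) φ Ur ∧ (∀ s ∈ Ur, φ s ∈ f.dom) ∧
      ∀ s ∈ Ur, p.toFun s = f.toFun (φ s)}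

lemma contDiff_append_right {n m : ℕ} (r : Fin n → ℝ) :
    ContDiff ℝ (⊤ : ℕ∞) (fun s : Fin m → ℝ => Fin.append r s) := by
  apply contDiff_pi.mpr
  intro i
  refine Fin.addCases (motive := fun i => ContDiff ℝ (⊤ : ℕ∞)
      fun s : Fin m → ℝ => Fin.append r s i) ?_ ?_ i
  · intro j
    simp only [Fin.append_left]
    exact contDiff_const
  · intro j
    simp only [Fin.append_right]
    exact contDiff_pi.mp contDiff_id j

/-- The slice `s ↦ p(r, s)` of an `(n+m)`-plaque at a parameter `r`. -/
def Plaque.slice {X : Type*} {n m : ℕ} (p : Plaque X (n + m)) (r : Fin n → ℝ)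
    (hr : Fin.append r (0 : Fin m → ℝ) ∈ p.dom) : Plaque X m where
  dom := (fun s : Fin m → ℝ => Fin.append r s) ⁻¹' p.dom
  isOpen := p.isOpen.preimage (contDiff_append_right r).continuous
  zero_mem := hr
  toFun := fun s => p.toFun (Fin.append r s)

/-- The plaque `p̃(r) = [s ↦ p(r,s)]` on the tangent bundle induced by an
`(n+m)`-plaque `p`. -/
def InducedBy {X : Type*} (D : SDS X) {m n : ℕ} (p : Plaque X (n + m))
    (q : Plaque (D.TangentBundle m) n) : Prop :=
  q.dom = {r : Fin n → ℝ | Fin.append r (0 : Fin m → ℝ) ∈ p.dom} ∧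
  ∀ r ∈ q.dom, ∃ (hr : Fin.append r (0 : Fin m → ℝ) ∈ p.dom)
    (hmem : p.slice r hr ∈ D.plaques m),
    q.toFun r = D.mkTangent (p.slice r hr) hmem rfl

/-- The generating plaques of the tangent diffeology on `T^m X`. -/
def tangentGen {X : Type*} (D : SDS X) (m : ℕ) : ∀ n : ℕ, Set (Plaque (D.TangentBundle m) n) :=
  fun n => {q | ∃ p : Plaque X (n + m), p ∈ D.plaques (n + m) ∧ InducedBy D p q}

/-- `DT` is a tangent smooth diffeological structure for `D` on `T^m X`: its plaques are
those generated by the plaques `p̃`, and on the generating plaques the relation `≈`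
is given by `p̃₁ ≈ⁿ p̃₂ ↔ p₁ ∼^{n+m} p₂`. -/
def IsTangentSDS {X : Type*} (D : SDS X) (m : ℕ) (DT : SDS (D.TangentBundle m)) : Prop :=
  DT.plaques = generatedPlaques (tangentGen D m) ∧
  ∀ (n : ℕ), 1 ≤ n → ∀ (p₁ p₂ : Plaque X (n + m)),
    p₁ ∈ D.plaques (n + m) → p₂ ∈ D.plaques (n + m) →
    ∀ (q₁ q₂ : Plaque (D.TangentBundle m) n), InducedBy D p₁ q₁ → InducedBy D p₂ q₂ →
    q₁.toFun 0 = q₂.toFun 0 →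
    (DT.rel n (q₁.toFun 0) q₁ q₂ ↔ D.rel (n + m) (p₁.toFun 0) p₁ p₂)

/-- The differential `D^m f : T^m X → T^m Y` of a smooth map, `[α]_F ↦ [f ∘ α]_{f F}`. -/
noncomputable def Dmap {X Y : Type*} (DX : SDS X) (DY : SDS Y) (f : X → Y)
    (hf : IsSmooth DX DY f) (m : ℕ) (hm : 1 ≤ m) :
    DX.TangentBundle m → DY.TangentBundle m := fun v =>
  ⟨f v.1, Quot.lift
    (fun a : DX.PlaqueAt m v.1 =>
      (Quot.mk _ (⟨a.1.map f, hf.1 m a.1 a.2.1, by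
        show f (a.1.toFun 0) = f v.1
        rw [a.2.2]⟩ : DY.PlaqueAt m (f v.1)) : DY.Tangent m (f v.1)))
    (fun a b h => Quot.sound (hf.2 m hm v.1 a.1 b.1 h)) v.2⟩


section Aux

/-- First `n` coordinates of a vector in `ℝ^{n+m}`. -/
def fst' {n m : ℕ} (v : Fin (n + m) → ℝ) : Fin n → ℝ := fun i => v (Fin.castAdd m i)

/-- Last `m` coordinates of a vector in `ℝ^{n+m}`. -/
def snd' {n m : ℕ} (v : Fin (n + m) → ℝ) : Fin m → ℝ := fun j => v (Fin.natAdd n j)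

lemma fst'_append {n m : ℕ} (r : Fin n → ℝ) (s : Fin m → ℝ) : fst' (Fin.append r s) = r :=
  funext fun i => Fin.append_left r s i

lemma snd'_append {n m : ℕ} (r : Fin n → ℝ) (s : Fin m → ℝ) : snd' (Fin.append r s) = s :=
  funext fun j => Fin.append_right r s j

lemma contDiff_fst' {n m : ℕ} : ContDiff ℝ (⊤ : ℕ∞) (fst' (n := n) (m := m)) :=
  contDiff_pi.mpr fun i => contDiff_pi.mp contDiff_id _

lemma contDiff_snd' {n m : ℕ} : ContDiff ℝ (⊤ : ℕ∞) (snd' (n := n) (m := m)) :=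
  contDiff_pi.mpr fun j => contDiff_pi.mp contDiff_id _

lemma append_zero_zero {n m : ℕ} :
    Fin.append (0 : Fin n → ℝ) (0 : Fin m → ℝ) = (0 : Fin (n + m) → ℝ) := by
  funext i
  refine Fin.addCases (motive := fun i => Fin.append (0 : Fin n → ℝ) (0 : Fin m → ℝ) i
      = (0 : Fin (n + m) → ℝ) i) ?_ ?_ i
  · intro j; simp [Fin.append_left]
  · intro j; simp [Fin.append_right]

lemma contDiff_append_zero {n m : ℕ} :
    ContDiff ℝ (⊤ : ℕ∞) (fun r : Fin n → ℝ => Fin.append r (0 : Fin m → ℝ)) := by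
  apply contDiff_pi.mpr
  intro i
  refine Fin.addCases (motive := fun i => ContDiff ℝ (⊤ : ℕ∞)
      fun r : Fin n → ℝ => Fin.append r (0 : Fin m → ℝ) i) ?_ ?_ i
  · intro j
    simp only [Fin.append_left]
    exact contDiff_pi.mp contDiff_id j
  · intro j
    simp only [Fin.append_right]
    exact contDiff_const

lemma Plaque.ext' {X : Type*} {n : ℕ} {p q : Plaque X n} (hd : p.dom = q.dom)
    (hf : p.toFun = q.toFun) : p = q := by
  cases p; cases q; cases hd; cases hf; rfl

/-- Restriction stays in the diffeology (it is composition with the identity). -/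
lemma restrict_mem {X : Type*} (D : SDS X) {n : ℕ} {p : Plaque X n} (hp : p ∈ D.plaques n)
    (V : Set (Fin n → ℝ)) (hV : IsOpen V) (h0 : (0 : Fin n → ℝ) ∈ V) (hsub : V ⊆ p.dom) :
    p.restrict V hV h0 ∈ D.plaques n :=
  D.comp_mem p hp id V hV h0 contDiffOn_id hsub

lemma SDS.mkTangent_congr {X : Type*} (D : SDS X) {n : ℕ} {p q : Plaque X n} (h : p = q)
    (hp : p ∈ D.plaques n) (hq : q ∈ D.plaques n) :
    D.mkTangent p hp rfl = D.mkTangent q hq rfl := by subst h; rfl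

/-- The pushforward of an induced plaque along `D^m f` is induced by the pushforward. -/
lemma inducedBy_map {X Y : Type*} {DX : SDS X} {DY : SDS Y} {f : X → Y}
    (hf : IsSmooth DX DY f) {m : ℕ} (hm : 1 ≤ m) {n : ℕ} {p : Plaque X (n + m)}
    {q : Plaque (DX.TangentBundle m) n} (h : InducedBy DX p q) :
    InducedBy DY (p.map f) (q.map (Dmap DX DY f hf m hm)) := by
  obtain ⟨hd, hv⟩ := h
  refine ⟨hd, ?_⟩
  intro r hr
  obtain ⟨hr', hmem, hval⟩ := hv r hr
  refine ⟨hr', hf.1 m _ hmem, ?_⟩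
  show Dmap DX DY f hf m hm (q.toFun r) = _
  rw [hval]
  rfl

/-- Pushforward of a generated plaque is generated. -/
lemma map_mem_generated {X Y : Type*} {DX : SDS X} {DY : SDS Y} {f : X → Y}
    (hf : IsSmooth DX DY f) {m : ℕ} (hm : 1 ≤ m) {n : ℕ}
    {q : Plaque (DX.TangentBundle m) n} (hq : q ∈ generatedPlaques (tangentGen DX m) n) :
    q.map (Dmap DX DY f hf m hm) ∈ generatedPlaques (tangentGen DY m) n := by
  intro r hr
  obtain ⟨Ur, hUo, hrU, hUsub, k, g, ⟨p, hp, hind⟩, φ, hφ, hφd, hv⟩ := hq r hr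
  exact ⟨Ur, hUo, hrU, hUsub, k, g.map (Dmap DX DY f hf m hm),
    ⟨p.map f, hf.1 _ p hp, inducedBy_map hf hm hind⟩, φ, hφ, hφd, fun s hs => by
      show Dmap DX DY f hf m hm (q.toFun s) = Dmap DX DY f hf m hm (g.toFun (φ s))
      rw [hv s hs]⟩

/-- Restriction of an induced plaque is induced (by a restricted plaque). -/
lemma inducedBy_restrict {X : Type*} (D : SDS X) {m n : ℕ} {p : Plaque X (n + m)}
    {q : Plaque (D.TangentBundle m) n} (h : InducedBy D p q) (hp : p ∈ D.plaques (n + m))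
    (W : Set (Fin n → ℝ)) (hWo : IsOpen W) (h0W : (0 : Fin n → ℝ) ∈ W) (hWsub : W ⊆ q.dom) :
    ∃ p' : Plaque X (n + m), p' ∈ D.plaques (n + m) ∧
      InducedBy D p' (q.restrict W hWo h0W) := by
  obtain ⟨hd, hv⟩ := h
  have hdo : IsOpen (p.dom ∩ fst' ⁻¹' W) :=
    p.isOpen.inter (hWo.preimage contDiff_fst'.continuous)
  have h0d : (0 : Fin (n + m) → ℝ) ∈ p.dom ∩ fst' ⁻¹' W := ⟨p.zero_mem, h0W⟩
  refine ⟨p.restrict _ hdo h0d, restrict_mem D hp _ hdo h0d Set.inter_subset_left, ?_, ?_⟩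
  · show W = {r | Fin.append r (0 : Fin m → ℝ) ∈ p.dom ∩ fst' ⁻¹' W}
    ext r
    simp only [Set.mem_setOf_eq, Set.mem_inter_iff, Set.mem_preimage, fst'_append]
    constructor
    · intro hrW
      have : r ∈ q.dom := hWsub hrW
      rw [hd] at this
      exact ⟨this, hrW⟩
    · exact fun h => h.2
  · intro r hr
    have hrW : r ∈ W := hr
    have hrq : r ∈ q.dom := hWsub hrW
    obtain ⟨hr', hmem, hval⟩ := hv r hrq
    have hr'' : Fin.append r (0 : Fin m → ℝ) ∈ p.dom ∩ fst' ⁻¹' W := by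
      refine ⟨hr', ?_⟩
      show fst' (Fin.append r (0 : Fin m → ℝ)) ∈ W
      rw [fst'_append]; exact hrW
    have e : (p.restrict _ hdo h0d).slice r hr'' = p.slice r hr' := by
      apply Plaque.ext'
      · show (fun s => Fin.append r s) ⁻¹' (p.dom ∩ fst' ⁻¹' W) = _
        ext s
        simp only [Set.mem_preimage, Set.mem_inter_iff, fst'_append]
        exact ⟨fun h => h.1, fun h => ⟨h, hrW⟩⟩
      · rfl
    refine ⟨hr'', e ▸ hmem, ?_⟩
    show q.toFun r = _
    rw [hval]
    exact D.mkTangent_congr e.symm hmem (e.symm ▸ hmem)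

/-- Every generated plaque on the tangent bundle restricts, near `0`, to a plaque
induced by an actual plaque of `X`. -/
lemma exists_induced_restrict {X : Type*} (D : SDS X) {m n : ℕ}
    (q : Plaque (D.TangentBundle m) n) (hq : q ∈ generatedPlaques (tangentGen D m) n)
    (V : Set (Fin n → ℝ)) (hVo : IsOpen V) (h0V : (0 : Fin n → ℝ) ∈ V) (hVsub : V ⊆ q.dom) :
    ∃ (W : Set (Fin n → ℝ)) (hWo : IsOpen W) (h0W : (0 : Fin n → ℝ) ∈ W) (_ : W ⊆ V)
      (p' : Plaque X (n + m)), p' ∈ D.plaques (n + m) ∧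
        InducedBy D p' (q.restrict W hWo h0W) := by
  obtain ⟨U0, hU0o, h0U0, hU0sub, k, g, ⟨p, hp, hgd, hgv⟩, φ, hφ, hφd, hval⟩ :=
    hq 0 (hVsub h0V)
  -- the map Ψ(r,s) = (φ r, s)
  set Ψ : (Fin (n + m) → ℝ) → (Fin (k + m) → ℝ) :=
    fun v => Fin.append (φ (fst' v)) (snd' v) with hΨ
  have hΨsmooth : ContDiffOn ℝ (⊤ : ℕ∞) Ψ (fst' ⁻¹' U0) := by
    have h1 : ContDiffOn ℝ (⊤ : ℕ∞) (fun v => φ (fst' v)) (fst' ⁻¹' U0) :=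
      hφ.comp ((contDiff_fst' (n := n) (m := m)).contDiffOn) (fun v hv => hv)
    apply contDiffOn_pi.mpr
    intro i
    refine Fin.addCases (motive := fun i => ContDiffOn ℝ (⊤ : ℕ∞)
        (fun v => Ψ v i) (fst' ⁻¹' U0)) ?_ ?_ i
    · intro j
      simp only [hΨ, Fin.append_left]
      exact contDiffOn_pi.mp h1 j
    · intro j
      simp only [hΨ, Fin.append_right]
      exact (contDiff_pi.mp contDiff_id _).contDiffOn
  have hΨ_append : ∀ (r : Fin n → ℝ) (s : Fin m → ℝ),
      Ψ (Fin.append r s) = Fin.append (φ r) s := by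
    intro r s; rw [hΨ]; simp only [fst'_append, snd'_append]
  set U'' : Set (Fin (n + m) → ℝ) :=
    ((fst' ⁻¹' U0) ∩ Ψ ⁻¹' p.dom) ∩ fst' ⁻¹' V with hU''
  have hU''o : IsOpen U'' :=
    (hΨsmooth.continuousOn.isOpen_inter_preimage
      (hU0o.preimage contDiff_fst'.continuous) p.isOpen).inter
      (hVo.preimage contDiff_fst'.continuous)
  have hfst0 : fst' (0 : Fin (n + m) → ℝ) = (0 : Fin n → ℝ) := rfl
  have h0U'' : (0 : Fin (n + m) → ℝ) ∈ U'' := by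
    refine ⟨⟨?_, ?_⟩, ?_⟩
    · show fst' (0 : Fin (n + m) → ℝ) ∈ U0
      rw [hfst0]; exact h0U0
    · show Ψ 0 ∈ p.dom
      have : Ψ (0 : Fin (n + m) → ℝ) = Fin.append (φ 0) (0 : Fin m → ℝ) := by
        rw [← append_zero_zero, hΨ_append]
      rw [this]
      have := hφd 0 h0U0
      rw [hgd] at this
      exact this
    · show fst' (0 : Fin (n + m) → ℝ) ∈ V
      rw [hfst0]; exact h0V
  -- key facts about membership in U''
  have hmemU'' : ∀ (r : Fin n → ℝ) (s : Fin m → ℝ),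
      Fin.append r s ∈ U'' ↔ (r ∈ U0 ∧ Fin.append (φ r) s ∈ p.dom) ∧ r ∈ V := by
    intro r s
    rw [hU'']
    simp only [Set.mem_inter_iff, Set.mem_preimage, fst'_append, hΨ_append]
  set W : Set (Fin n → ℝ) := {r | Fin.append r (0 : Fin m → ℝ) ∈ U''} with hW
  have hWo : IsOpen W := hU''o.preimage contDiff_append_zero.continuous
  have h0W : (0 : Fin n → ℝ) ∈ W := by
    show Fin.append (0 : Fin n → ℝ) (0 : Fin m → ℝ) ∈ U''
    rw [append_zero_zero]; exact h0U''
  have hWV : W ⊆ V := fun r hr => ((hmemU'' r 0).mp hr).2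
  refine ⟨W, hWo, h0W, hWV, p.comp Ψ U'' hU''o h0U'',
    D.comp_mem p hp Ψ U'' hU''o h0U''
      (hΨsmooth.mono fun v hv => hv.1.1) (fun v hv => hv.1.2), rfl, ?_⟩
  intro r hr
  have hrW : r ∈ W := hr
  have hrU'' : Fin.append r (0 : Fin m → ℝ) ∈ U'' := hrW
  obtain ⟨⟨hrU0, hrp⟩, hrV⟩ := (hmemU'' r 0).mp hrU''
  have hφr : φ r ∈ g.dom := hφd r hrU0
  have hrφ : Fin.append (φ r) (0 : Fin m → ℝ) ∈ p.dom := by rw [hgd] at hφr; exact hφr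
  obtain ⟨hrφ', hmemφ, hvalφ⟩ := hgv (φ r) hφr
  have e : (p.comp Ψ U'' hU''o h0U'').slice r hrU'' = p.slice (φ r) hrφ' := by
    apply Plaque.ext'
    · show (fun s => Fin.append r s) ⁻¹' U'' = (fun s => Fin.append (φ r) s) ⁻¹' p.dom
      ext s
      simp only [Set.mem_preimage]
      rw [hmemU'' r s]
      exact ⟨fun h => h.1.2, fun h => ⟨⟨hrU0, h⟩, hrV⟩⟩
    · funext s
      show p.toFun (Ψ (Fin.append r s)) = p.toFun (Fin.append (φ r) s)
      rw [hΨ_append]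
  refine ⟨hrU'', e ▸ hmemφ, ?_⟩
  show q.toFun r = _
  rw [hval r hrU0, hvalφ]
  exact D.mkTangent_congr e.symm hmemφ (e.symm ▸ hmemφ)

end Aux

/-- Proposition 2.2: if `f : X → Y` is a smooth map of smooth diffeological spaces,
then `D^m f : T^m X → T^m Y` is a smooth map between the tangent smooth
diffeological spaces. -/
theorem Dmap_isSmooth {X Y : Type*} (DX : SDS X) (DY : SDS Y) (f : X → Y)
    (hf : IsSmooth DX DY f) (m : ℕ) (hm : 1 ≤ m)
    (DTX : SDS (DX.TangentBundle m)) (hDTX : IsTangentSDS DX m DTX)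
    (DTY : SDS (DY.TangentBundle m)) (hDTY : IsTangentSDS DY m DTY) :
    IsSmooth DTX DTY (Dmap DX DY f hf m hm) := by
  obtain ⟨hPX, hRX⟩ := hDTX
  obtain ⟨hPY, hRY⟩ := hDTY
  have hmap_mem : ∀ (n : ℕ) (q : Plaque (DX.TangentBundle m) n), q ∈ DTX.plaques n →
      q.map (Dmap DX DY f hf m hm) ∈ DTY.plaques n := by
    intro n q hq
    rw [hPY]
    exact map_mem_generated hf hm (by rw [hPX] at hq; exact hq)
  refine ⟨hmap_mem, ?_⟩
  intro n hn F q₁ q₂ hrel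
  obtain ⟨⟨hq₁, h01⟩, hq₂, h02⟩ := DTX.mem_of_rel hn hrel
  have hq₁' : q₁ ∈ generatedPlaques (tangentGen DX m) n := by rw [hPX] at hq₁; exact hq₁
  have hq₂' : q₂ ∈ generatedPlaques (tangentGen DX m) n := by rw [hPX] at hq₂; exact hq₂
  obtain ⟨W₁, hW₁o, h0W₁, hW₁sub, p₁, hp₁, hind₁⟩ :=
    exists_induced_restrict DX q₁ hq₁' q₁.dom q₁.isOpen q₁.zero_mem subset_rfl
  obtain ⟨W, hWo, h0W, hWsub, p₂, hp₂, hind₂⟩ :=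
    exists_induced_restrict DX q₂ hq₂' (W₁ ∩ q₂.dom) (hW₁o.inter q₂.isOpen)
      ⟨h0W₁, q₂.zero_mem⟩ Set.inter_subset_right
  have hWsub₁ : W ⊆ W₁ := fun r hr => (hWsub hr).1
  have hWsub₂ : W ⊆ q₂.dom := fun r hr => (hWsub hr).2
  have hWsubq₁ : W ⊆ q₁.dom := fun r hr => hW₁sub (hWsub₁ hr)
  -- restrict the first induced plaque further to W
  obtain ⟨p₁', hp₁', hind₁'⟩ := inducedBy_restrict DX hind₁ hp₁ W hWo h0W hWsub₁
  have hind₁'' : InducedBy DX p₁' (q₁.restrict W hWo h0W) := hind₁'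
  -- transfer the relation to the restrictions
  have t₁ : DTX.rel n F q₁ (q₁.restrict W hWo h0W) :=
    DTX.rel_restrict q₁ hn hq₁ h01 W hWo h0W hWsubq₁
  have t₂ : DTX.rel n F q₂ (q₂.restrict W hWo h0W) :=
    DTX.rel_restrict q₂ hn hq₂ h02 W hWo h0W hWsub₂
  have hrelW : DTX.rel n F (q₁.restrict W hWo h0W) (q₂.restrict W hWo h0W) :=
    DTX.rel_trans hn (DTX.rel_symm hn t₁) (DTX.rel_trans hn hrel t₂)
  have h01' : (q₁.restrict W hWo h0W).toFun 0 = F := h01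
  have h02' : (q₂.restrict W hWo h0W).toFun 0 = F := h02
  have h0eq : (q₁.restrict W hWo h0W).toFun 0 = (q₂.restrict W hWo h0W).toFun 0 :=
    h01'.trans h02'.symm
  -- use the characterization on X to descend to plaques of X
  have hX : DX.rel (n + m) (p₁'.toFun 0) p₁' p₂ :=
    (hRX n hn p₁' p₂ hp₁' hp₂ _ _ hind₁'' hind₂ h0eq).mp (by rw [h01']; exact hrelW)
  -- push forward with f
  have hnm : 1 ≤ n + m := hn.trans (Nat.le_add_right n m)
  have hY : DY.rel (n + m) (f (p₁'.toFun 0)) (p₁'.map f) (p₂.map f) :=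
    hf.2 (n + m) hnm _ p₁' p₂ hX
  -- use the characterization on Y to ascend to the tangent bundle of Y
  have hind₁Y : InducedBy DY (p₁'.map f)
      ((q₁.restrict W hWo h0W).map (Dmap DX DY f hf m hm)) :=
    inducedBy_map hf hm hind₁''
  have hind₂Y : InducedBy DY (p₂.map f)
      ((q₂.restrict W hWo h0W).map (Dmap DX DY f hf m hm)) :=
    inducedBy_map hf hm hind₂
  have h0eqY : ((q₁.restrict W hWo h0W).map (Dmap DX DY f hf m hm)).toFun 0 =
      ((q₂.restrict W hWo h0W).map (Dmap DX DY f hf m hm)).toFun 0 :=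
    congrArg (Dmap DX DY f hf m hm) h0eq
  have hrelWY := (hRY n hn (p₁'.map f) (p₂.map f) (hf.1 _ _ hp₁') (hf.1 _ _ hp₂)
    _ _ hind₁Y hind₂Y h0eqY).mpr hY
  have h0Y₁ : (q₁.map (Dmap DX DY f hf m hm)).toFun 0 = Dmap DX DY f hf m hm F :=
    congrArg (Dmap DX DY f hf m hm) h01
  have h0Y₂ : (q₂.map (Dmap DX DY f hf m hm)).toFun 0 = Dmap DX DY f hf m hm F :=
    congrArg (Dmap DX DY f hf m hm) h02
  -- reassemble via restriction on the Y side
  have s₁ : DTY.rel n (Dmap DX DY f hf m hm F) (q₁.map (Dmap DX DY f hf m hm))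
      ((q₁.restrict W hWo h0W).map (Dmap DX DY f hf m hm)) :=
    DTY.rel_restrict (q₁.map (Dmap DX DY f hf m hm)) hn (hmap_mem n q₁ hq₁) h0Y₁
      W hWo h0W hWsubq₁
  have s₂ : DTY.rel n (Dmap DX DY f hf m hm F) (q₂.map (Dmap DX DY f hf m hm))
      ((q₂.restrict W hWo h0W).map (Dmap DX DY f hf m hm)) :=
    DTY.rel_restrict (q₂.map (Dmap DX DY f hf m hm)) hn (hmap_mem n q₂ hq₂) h0Y₂
      W hWo h0W hWsub₂
  have hrelWY' : DTY.rel n (Dmap DX DY f hf m hm F)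
      ((q₁.restrict W hWo h0W).map (Dmap DX DY f hf m hm))
      ((q₂.restrict W hWo h0W).map (Dmap DX DY f hf m hm)) := by
    have e : ((q₁.restrict W hWo h0W).map (Dmap DX DY f hf m hm)).toFun 0 =
        Dmap DX DY f hf m hm F := congrArg (Dmap DX DY f hf m hm) h01'
    rw [← e]; exact hrelWY
  exact DTY.rel_trans hn s₁ (DTY.rel_trans hn hrelWY' (DTY.rel_symm hn s₂))
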